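/- Let G = (V, E) be a finite simple graph, let k ∈ ℕ, and let B be the set of blockers of Φ(G). Then there exists a set S ⊆ V with |S| ≤ k such that the graph G − S obtained by deleting the vertices of S from G is acyclic, if and only if there exists a set S′ of vertices of Φ(G) with |S′| ≤ k + |B| such that Φ(G) − S′ is acyclic. -/

import Mathlib

/-- The blockers of `Φ(G)`: one new vertex for each unordered pair of distinct
non-adjacent vertices of `G`. -/
def Blocker {V : Type} (G : SimpleGraph V) : Type :=
  {e : Sym2 V // ¬ e.IsDiag ∧ e ∉ G.edgeSet}

/-- The transformation `Φ`: the graph on `V ⊕ B` containing all edges of `G`,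
in which every blocker is adjacent to all other vertices. -/
def Phi {V : Type} (G : SimpleGraph V) : SimpleGraph (V ⊕ Blocker G) :=
  SimpleGraph.fromRel (fun x y =>
    match x, y with
    | Sum.inl u, Sum.inl v => G.Adj u v
    | _, _ => True)

open SimpleGraph in
lemma acyclic_comap' {α β : Type} {H : SimpleGraph α} {H' : SimpleGraph β}
    (f : H →g H') (hf : Function.Injective f) (h : H'.IsAcyclic) : H.IsAcyclic :=
  fun _ p hp => h (p.map f) (hp.map hf)

open SimpleGraph in
lemma triangle_not_acyclic' {α : Type} {H : SimpleGraph α} {a b c : α}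
    (hab : H.Adj a b) (hbc : H.Adj b c) (hca : H.Adj c a) : ¬ H.IsAcyclic := by
  intro h
  refine h (Walk.cons hab (Walk.cons hbc (Walk.cons hca Walk.nil))) ?_
  have h1 := hab.ne; have h2 := hbc.ne; have h3 := hca.ne
  simp only [Walk.isCycle_def, Walk.isTrail_def, Walk.edges_cons, Walk.edges_nil,
    Walk.support_cons, Walk.support_nil, List.tail_cons]
  refine ⟨?_, by simp, ?_⟩
  · simp [Sym2.eq, Sym2.rel_iff']
    aesop
  · simp
    aesop

open SimpleGraph in
lemma indep_acyclic' {α : Type} (G : SimpleGraph α) (A : Set α)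
    (hA : ∀ a ∈ A, ∀ b ∈ A, ¬ G.Adj a b) : (G.induce A).IsAcyclic := by
  intro v p hp
  cases p with
  | nil => exact hp.ne_nil rfl
  | cons h q => exact hA _ v.2 _ (Subtype.prop _) h

open SimpleGraph in
lemma star_acyclic' {α : Type} (G : SimpleGraph α) (A : Set α) (w : α)
    (hA : ∀ a ∈ A, ∀ b ∈ A, ¬ G.Adj a b) : (G.induce (A ∪ {w})).IsAcyclic := by
  intro v p hp
  have key : ∀ x y : ↥(A ∪ {w} : Set α), (G.induce _).Adj x y → (x : α) = w ∨ (y : α) = w := by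
    rintro ⟨x, hx⟩ ⟨y, hy⟩ hadj
    rcases hx with hx | hx
    · rcases hy with hy | hy
      · exact absurd hadj (hA _ hx _ hy)
      · exact Or.inr hy
    · exact Or.inl hx
  cases p with
  | nil => exact hp.ne_nil rfl
  | cons h1 p1 =>
    cases p1 with
    | nil => simpa using hp.three_le_length
    | cons h2 p2 =>
      cases p2 with
      | nil => simpa using hp.three_le_length
      | cons h3 p3 =>
        rename_i s1 s2 s3
        obtain ⟨-, hnd⟩ := hp
        simp only [Walk.support_cons, List.tail_cons, List.nodup_cons] at hnd
        obtain ⟨hns1, hns2, -⟩ := hnd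
        have hs12 : s1 ≠ s2 := fun e => hns1 (by simp [e])
        have hs13 : s1 ≠ s3 := fun e => hns1 (by simp [e, Walk.start_mem_support])
        by_cases hw2 : (s2 : α) = w
        · have hs1w : (s1 : α) ≠ w := fun e => hs12 (Subtype.ext (e.trans hw2.symm))
          have hvw : (v : α) = w := (key _ _ h1).resolve_right hs1w
          have hvs2 : s2 = v := Subtype.ext (hw2.trans hvw.symm)
          exact hns2 (hvs2 ▸ Walk.end_mem_support p3)
        · have hs1w : (s1 : α) = w := (key _ _ h2).resolve_right hw2
          have hs3w : (s3 : α) = w := (key _ _ h3).resolve_left hw2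
          exact hs13 (Subtype.ext (hs1w.trans hs3w.symm))

lemma phi_adj_inl_inl' {V : Type} (G : SimpleGraph V) (u v : V) :
    (Phi G).Adj (Sum.inl u) (Sum.inl v) ↔ G.Adj u v := by
  simp only [Phi, SimpleGraph.fromRel_adj]
  constructor
  · rintro ⟨-, h | h⟩
    · exact h
    · exact h.symm
  · intro h
    exact ⟨by simpa using h.ne, Or.inl h⟩

lemma phi_adj_inr' {V : Type} (G : SimpleGraph V) (x : V ⊕ Blocker G) (b : Blocker G)
    (h : x ≠ Sum.inr b) : (Phi G).Adj x (Sum.inr b) := by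
  refine ⟨h, ?_⟩
  cases x <;> exact Or.inr trivial

theorem stmt_9 {V : Type} [Fintype V] (G : SimpleGraph V) (k : ℕ) :
    (∃ S : Set V, S.ncard ≤ k ∧ (G.induce Sᶜ).IsAcyclic) ↔
      (∃ S' : Set (V ⊕ Blocker G),
        S'.ncard ≤ k + Nat.card (Blocker G) ∧ ((Phi G).induce S'ᶜ).IsAcyclic) := by
  haveI : Finite (Blocker G) := by unfold Blocker; infer_instance
  constructor
  · rintro ⟨S, hS, hac⟩
    refine ⟨Sum.inl '' S ∪ Set.range Sum.inr, ?_, ?_⟩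
    · calc (Sum.inl '' S ∪ Set.range Sum.inr).ncard
          ≤ (Sum.inl '' S : Set (V ⊕ Blocker G)).ncard + (Set.range Sum.inr : Set (V ⊕ Blocker G)).ncard :=
            Set.ncard_union_le _ _
        _ ≤ k + Nat.card (Blocker G) := by
            rw [Set.ncard_image_of_injective _ Sum.inl_injective,
              ← Set.image_univ, Set.ncard_image_of_injective _ Sum.inr_injective,
              Set.ncard_univ]
            omega
    · have hcompl : ((Sum.inl '' S ∪ Set.range Sum.inr : Set (V ⊕ Blocker G)))ᶜ = Sum.inl '' Sᶜ := by
        ext x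
        cases x <;> simp
      rw [hcompl]
      refine acyclic_comap' (H' := G.induce Sᶜ)
        ⟨fun x => ⟨x.2.choose, x.2.choose_spec.1⟩, ?_⟩ ?_ hac
      · rintro ⟨x, hx⟩ ⟨y, hy⟩ hadj
        have hx' := hx.choose_spec.2
        have hy' := hy.choose_spec.2
        have : (Phi G).Adj x y := hadj
        rw [← hx', ← hy', phi_adj_inl_inl'] at this
        exact this
      · rintro ⟨x, hx⟩ ⟨y, hy⟩ h
        have h1 : hx.choose = hy.choose := congrArg Subtype.val h
        apply Subtype.ext
        show x = y
        rw [← hx.choose_spec.2, ← hy.choose_spec.2, h1]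
  · rintro ⟨S', hS', hac⟩
    set SV : Set V := Sum.inl ⁻¹' S' with hSV
    set RB : Set (Blocker G) := (Sum.inr ⁻¹' S')ᶜ with hRBdef
    -- cardinality decomposition
    have hdecomp : S' = Sum.inl '' (Sum.inl ⁻¹' S') ∪ Sum.inr '' (Sum.inr ⁻¹' S') := by
      ext x
      cases x <;> simp
    have hcard : S'.ncard = SV.ncard + (Sum.inr ⁻¹' S').ncard := by
      conv_lhs => rw [hdecomp]
      rw [Set.ncard_union_eq (by
        rw [Set.disjoint_left]
        rintro x ⟨v, -, rfl⟩ ⟨b, -, h⟩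
        exact Sum.inl_ne_inr h.symm),
        Set.ncard_image_of_injective _ Sum.inl_injective,
        Set.ncard_image_of_injective _ Sum.inr_injective]
    have hcompl := Set.ncard_add_ncard_compl (Sum.inr ⁻¹' S' : Set (Blocker G))
    have hkey : SV.ncard ≤ k + RB.ncard := by
      rw [← hRBdef] at hcompl
      omega
    by_cases hRB : RB = ∅
    · -- all blockers removed
      have hSVk : SV.ncard ≤ k := by
        rw [hRB, Set.ncard_empty] at hkey; omega
      refine ⟨SV, hSVk, ?_⟩
      refine acyclic_comap' (H' := (Phi G).induce S'ᶜ)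
        ⟨fun x => ⟨Sum.inl x.1, x.2⟩, ?_⟩ ?_ hac
      · rintro ⟨a, ha⟩ ⟨b, hb⟩ hadj
        exact (phi_adj_inl_inl' G a b).mpr hadj
      · rintro ⟨a, ha⟩ ⟨b, hb⟩ h
        exact Subtype.ext (Sum.inl_injective (congrArg Subtype.val h))
    · obtain ⟨b, hb⟩ : RB.Nonempty := Set.nonempty_iff_ne_empty.mpr hRB
      have hbS : Sum.inr b ∈ S'ᶜ := hb
      -- the remaining V-vertices form an independent set
      have hindep : ∀ u ∈ SVᶜ, ∀ v ∈ SVᶜ, ¬ G.Adj u v := by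
        intro u hu v hv hadj
        refine triangle_not_acyclic'
          (H := (Phi G).induce S'ᶜ)
          (a := ⟨Sum.inl u, hu⟩) (b := ⟨Sum.inl v, hv⟩) (c := ⟨Sum.inr b, hbS⟩)
          ?_ ?_ ?_ hac
        · exact (phi_adj_inl_inl' G u v).mpr hadj
        · exact phi_adj_inr' G _ b (Sum.inl_ne_inr)
        · exact ((phi_adj_inr' G _ b (Sum.inl_ne_inr)).symm)
      by_cases hk : SV.ncard ≤ k
      · exact ⟨SV, hk, indep_acyclic' G SVᶜ hindep⟩
      · push_neg at hk
        by_cases hVc : SVᶜ = ∅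
        · -- all of V removed; at most two blockers can remain
          have hRB2 : RB.ncard ≤ 2 := by
            by_contra h3
            push_neg at h3
            obtain ⟨b1, hb1, b2, hb2, b3, hb3, h12, h13, h23⟩ := (Set.two_lt_ncard).mp h3
            exact triangle_not_acyclic'
              (H := (Phi G).induce S'ᶜ)
              (a := ⟨Sum.inr b1, hb1⟩) (b := ⟨Sum.inr b2, hb2⟩) (c := ⟨Sum.inr b3, hb3⟩)
              (phi_adj_inr' G _ b2 (by simpa using h12))
              (phi_adj_inr' G _ b3 (by simpa using h23))
              ((phi_adj_inr' G _ b3 (by simpa using h13)).symm) hac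
          have hSVuniv : SV = Set.univ := by
            rwa [Set.compl_empty_iff] at hVc
          have hVk : Nat.card V ≤ k + 2 := by
            rw [← Set.ncard_univ, ← hSVuniv]
            omega
          by_cases hV : Nat.card V ≤ k
          · refine ⟨Set.univ, by rw [Set.ncard_univ]; exact hV, ?_⟩
            apply indep_acyclic'
            intro a ha
            simp at ha
          · push_neg at hV
            obtain ⟨w1⟩ : Nonempty V := (Nat.card_pos_iff.mp (by omega)).1
            have hcw1 := Set.ncard_add_ncard_compl ({w1} : Set V)
            rw [Set.ncard_singleton] at hcw1
            by_cases hV1 : Nat.card V ≤ k + 1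
            · refine ⟨({w1} : Set V)ᶜ, by omega, ?_⟩
              have := star_acyclic' G ∅ w1 (by simp)
              rw [Set.empty_union] at this
              rwa [compl_compl]
            · push_neg at hV1
              have : Nontrivial V := by
                rw [← Finite.one_lt_card_iff_nontrivial]; omega
              obtain ⟨w2, hw2⟩ := exists_ne w1
              have hcw := Set.ncard_add_ncard_compl ({w1, w2} : Set V)
              rw [Set.ncard_pair (Ne.symm hw2)] at hcw
              refine ⟨({w1, w2} : Set V)ᶜ, by omega, ?_⟩
              have := star_acyclic' G {w1} w2 (by
                intro a ha b hb
                rw [Set.mem_singleton_iff] at ha hb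
                rw [ha, hb]
                exact G.loopless.irrefl _)
              rw [Set.singleton_union] at this
              rwa [compl_compl]
        · -- some V-vertex remains, so at most one blocker remains
          obtain ⟨u0, hu0⟩ : SVᶜ.Nonempty := Set.nonempty_iff_ne_empty.mpr hVc
          have hRB1 : RB ⊆ {b} := by
            intro b' hb'
            by_contra hne
            rw [Set.mem_singleton_iff] at hne
            exact triangle_not_acyclic'
              (H := (Phi G).induce S'ᶜ)
              (a := ⟨Sum.inl u0, hu0⟩) (b := ⟨Sum.inr b', hb'⟩) (c := ⟨Sum.inr b, hbS⟩)
              (phi_adj_inr' G _ b' (Sum.inl_ne_inr))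
              (phi_adj_inr' G _ b (by simpa using hne))
              ((phi_adj_inr' G _ b (Sum.inl_ne_inr)).symm) hac
          have hRBcard : RB.ncard ≤ 1 := by
            calc RB.ncard ≤ ({b} : Set (Blocker G)).ncard := Set.ncard_le_ncard hRB1
              _ = 1 := Set.ncard_singleton b
          have hSV1 : SV.ncard ≤ k + 1 := by omega
          obtain ⟨w, hw⟩ : SV.Nonempty := by
            rw [Set.nonempty_iff_ne_empty]
            intro h
            rw [h, Set.ncard_empty] at hk
            omega
          refine ⟨SV \ {w}, ?_, ?_⟩
          · rw [Set.ncard_diff_singleton_of_mem hw]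
            omega
          · have hcompl2 : (SV \ {w})ᶜ = SVᶜ ∪ {w} := by
              ext v
              simp only [Set.mem_compl_iff, Set.mem_diff, Set.mem_union, Set.mem_singleton_iff]
              by_cases hv : v = w <;> simp [hv]
            rw [hcompl2]
            exact star_acyclic' G SVᶜ w hindep
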